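/- Outer description of the ordered odd parity polytope: For r in N^k, the convex hull of all tuples (x^(1),...,x^(k)) of ordered binary vectors x^(i) in {0,1}^{r_i} whose total number of ones is odd equals the set of points (x^(1),...,x^(k)) with each x^(i) in P_ord^{r_i} satisfying, for every F subset of [k] with |F| even, the inequality sum_{i in [k]\F} f(x^(i)) + sum_{i in F} (1 - f(x^(i))) >= 1. -/

import Mathlib

/-- The alternating sum `f(y) = ∑_j (-1)^{j-1} y_j` (0-indexed here). -/
def altSum {m : ℕ} (y : Fin m → ℝ) : ℝ := ∑ j : Fin m, (-1 : ℝ) ^ (j : ℕ) * y j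

/-- The `s`-th vertex of the order simplex: `s` ones followed by zeros. -/
def stepVec (m s : ℕ) : Fin m → ℝ := fun j => if (j : ℕ) < s then 1 else 0

/-- Extension of `y` with `1` at index `0` and `0` beyond `m`. -/
def extG {m : ℕ} (y : Fin m → ℝ) : ℕ → ℝ := fun s =>
  if s = 0 then 1 else if h : s - 1 < m then y ⟨s - 1, h⟩ else 0

/-- Simplex coefficients. -/
def coefOf {m : ℕ} (y : Fin m → ℝ) (s : ℕ) : ℝ := extG y s - extG y (s + 1)

lemma extG_zero {m : ℕ} (y : Fin m → ℝ) : extG y 0 = 1 := by simp [extG]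

lemma extG_succ {m : ℕ} (y : Fin m → ℝ) (s : ℕ) (h : s < m) :
    extG y (s + 1) = y ⟨s, h⟩ := by simp [extG, h]

lemma extG_succ_of_ge {m : ℕ} (y : Fin m → ℝ) (s : ℕ) (h : m ≤ s) :
    extG y (s + 1) = 0 := by
  simp [extG, Nat.not_lt.2 h]

lemma coef_nonneg {m : ℕ} (y : Fin m → ℝ)
    (hb : ∀ j, 0 ≤ y j ∧ y j ≤ 1)
    (hm : ∀ j j' : Fin m, j ≤ j' → y j' ≤ y j) (s : ℕ) :
    0 ≤ coefOf y s := by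
  unfold coefOf
  rcases Nat.eq_zero_or_pos s with rfl | hs
  · rcases Nat.eq_zero_or_pos m with rfl | hm0
    · simp [extG_zero, extG_succ_of_ge]
    · rw [extG_zero, extG_succ y 0 hm0]
      linarith [(hb ⟨0, hm0⟩).2]
  · obtain ⟨t, rfl⟩ : ∃ t, s = t + 1 := ⟨s - 1, by omega⟩
    rcases Nat.lt_or_ge t m with ht | ht
    · rw [extG_succ y t ht]
      rcases Nat.lt_or_ge (t + 1) m with ht' | ht'
      · rw [extG_succ y (t + 1) ht']
        exact sub_nonneg.2 (hm _ _ (by simp))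
      · rw [extG_succ_of_ge y (t + 1) ht']
        linarith [(hb ⟨t, ht⟩).1]
    · rw [extG_succ_of_ge y t ht, extG_succ_of_ge y (t + 1) (le_trans ht (Nat.le_succ t))]
      simp

lemma coef_sum {m : ℕ} (y : Fin m → ℝ) :
    ∑ s ∈ Finset.range (m + 1), coefOf y s = 1 := by
  unfold coefOf
  rw [Finset.sum_range_sub' (extG y) (m + 1), extG_zero, extG_succ_of_ge y m le_rfl]
  ring

lemma coef_apply {m : ℕ} (y : Fin m → ℝ) (j : Fin m) :
    ∑ s ∈ Finset.range (m + 1), coefOf y s * stepVec m s j = y j := by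
  have h1 : ∀ s ∈ Finset.range (m + 1), coefOf y s * stepVec m s j
      = if (j : ℕ) < s then coefOf y s else 0 := by
    intro s _
    unfold stepVec
    split <;> simp
  rw [Finset.sum_congr rfl h1, ← Finset.sum_filter]
  have h2 : Finset.filter (fun s => (j : ℕ) < s) (Finset.range (m + 1))
      = Finset.Ico ((j : ℕ) + 1) (m + 1) := by
    ext s
    simp only [Finset.mem_filter, Finset.mem_range, Finset.mem_Ico]
    omega
  rw [h2, Finset.sum_Ico_eq_sub _ (by omega)]
  unfold coefOf
  rw [Finset.sum_range_sub' (extG y), Finset.sum_range_sub' (extG y),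
    extG_zero, extG_succ_of_ge y m le_rfl, extG_succ y (j : ℕ) j.isLt]
  ring

lemma altSum_stepVec {m s : ℕ} (hs : s ≤ m) :
    altSum (stepVec m s) = if Odd s then 1 else 0 := by
  unfold altSum stepVec
  rw [Fin.sum_univ_eq_sum_range (fun j => (-1 : ℝ) ^ j * if j < s then 1 else 0)]
  have h1 : ∀ j ∈ Finset.range m, (-1 : ℝ) ^ j * (if j < s then 1 else 0)
      = if j < s then (-1 : ℝ) ^ j else 0 := by
    intro j _; split <;> simp
  rw [Finset.sum_congr rfl h1, ← Finset.sum_filter]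
  have h2 : Finset.filter (fun j => j < s) (Finset.range m) = Finset.range s := by
    ext j
    simp only [Finset.mem_filter, Finset.mem_range]
    omega
  rw [h2, neg_one_geom_sum]
  by_cases h : Even s
  · simp [h, Nat.not_odd_iff_even.2 h]
  · simp [h, Nat.not_even_iff_odd.1 h]

lemma altSum_linear_sum {m : ℕ} {ι : Type*} (t : Finset ι) (c : ι → ℝ) (v : ι → Fin m → ℝ) :
    altSum (fun j => ∑ s ∈ t, c s * v s j) = ∑ s ∈ t, c s * altSum (v s) := by
  unfold altSum
  have : ∀ s, c s * ∑ j : Fin m, (-1 : ℝ) ^ (j : ℕ) * v s j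
      = ∑ j : Fin m, (-1 : ℝ) ^ (j : ℕ) * (c s * v s j) := by
    intro s; rw [Finset.mul_sum]; congr 1; ext j; ring
  simp only [this]
  rw [Finset.sum_comm]
  congr 1; ext j
  rw [Finset.mul_sum]


lemma filter_lt_card {m s : ℕ} (hs : s ≤ m) :
    (Finset.univ.filter fun j : Fin m => (j : ℕ) < s).card = s := by
  have h : (Finset.univ.filter fun j : Fin m => (j : ℕ) < s)
      = Finset.image (Fin.castLE hs) Finset.univ := by
    ext j
    simp only [Finset.mem_filter, Finset.mem_univ, true_and, Finset.mem_image]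
    constructor
    · intro h; exact ⟨⟨(j : ℕ), h⟩, Fin.ext rfl⟩
    · rintro ⟨j', rfl⟩; exact j'.isLt
  rw [h, Finset.card_image_of_injective _ (Fin.castLE_injective hs)]
  simp

lemma ncard_ones_stepVec {m s : ℕ} (hs : s ≤ m) :
    {j : Fin m | stepVec m s j = 1}.ncard = s := by
  have h : {j : Fin m | stepVec m s j = 1}
      = ↑(Finset.univ.filter fun j : Fin m => (j : ℕ) < s) := by
    ext j
    simp only [Set.mem_setOf_eq, Finset.coe_filter, Finset.mem_univ, true_and, stepVec]
    split <;> simp_all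
  rw [h, Set.ncard_coe_finset, filter_lt_card hs]

lemma eq_stepVec {m : ℕ} (y : Fin m → ℝ) (h01 : ∀ j, y j = 0 ∨ y j = 1)
    (hm : ∀ j j' : Fin m, j ≤ j' → y j' ≤ y j) :
    y = stepVec m ({j | y j = 1}.ncard) ∧ {j | y j = 1}.ncard ≤ m := by
  classical
  set T : Finset (Fin m) := Finset.univ.filter (fun j => y j = 1) with hT
  have hset : {j | y j = 1} = ↑T := by
    ext j; simp [hT]
  have hncard : {j | y j = 1}.ncard = T.card := by rw [hset, Set.ncard_coe_finset]
  have hsm : T.card ≤ m := by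
    simpa using Finset.card_le_univ T
  have hmem : ∀ j : Fin m, j ∈ T ↔ (j : ℕ) < T.card := by
    intro j
    constructor
    · intro hj
      have hsub : Finset.Iic j ⊆ T := by
        intro j' hj'
        simp only [Finset.mem_Iic] at hj'
        have h1 : y j ≤ y j' := hm j' j hj'
        have h2 : y j = 1 := by simpa [hT] using hj
        rcases h01 j' with h | h
        · rw [h2, h] at h1; linarith
        · simp [hT, h]
      have := Finset.card_le_card hsub
      rw [Fin.card_Iic] at this
      omega
    · intro hj
      by_contra hjT
      have hsub : T ⊆ Finset.Iio j := by
        intro j' hj'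
        simp only [Finset.mem_Iio]
        by_contra hlt
        push_neg at hlt
        have h1 : y j' ≤ y j := hm j j' hlt
        have h2 : y j' = 1 := by simpa [hT] using hj'
        have h3 : y j = 1 := by
          rcases h01 j with h | h
          · rw [h2, h] at h1; linarith
          · exact h
        exact hjT (by simp [hT, h3])
      have := Finset.card_le_card hsub
      rw [Fin.card_Iio] at this
      omega
  constructor
  · funext j
    rw [hncard]
    unfold stepVec
    split
    · next h =>
      have := (hmem j).mpr h
      simpa [hT] using this
    · next h =>
      rcases h01 j with h' | h'
      · exact h'
      · exact absurd ((hmem j).mp (by simp [hT, h'])) h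
  · rw [hncard]; exact hsm


lemma indicator_mem_V {k : ℕ} (Q : Finset (Fin k)) (hQ : Odd Q.card) :
    (fun i => if i ∈ Q then (1 : ℝ) else 0) ∈
      {b : Fin k → ℝ | (∀ i, b i = 0 ∨ b i = 1) ∧ Odd ({i | b i = 1}.ncard)} := by
  constructor
  · intro i; by_cases h : i ∈ Q <;> simp [h]
  · have h : {i | (if i ∈ Q then (1 : ℝ) else 0) = 1} = ↑Q := by
      ext i; by_cases h : i ∈ Q <;> simp [h]
    rw [h, Set.ncard_coe_finset]
    exact hQ

lemma jeroslow (k : ℕ) (a : Fin k → ℝ) (h0 : ∀ i, 0 ≤ a i) (h1 : ∀ i, a i ≤ 1)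
    (hF : ∀ F : Finset (Fin k), Even F.card →
      1 ≤ ∑ i ∈ Fᶜ, a i + ∑ i ∈ F, (1 - a i)) :
    a ∈ convexHull ℝ {b : Fin k → ℝ |
      (∀ i, b i = 0 ∨ b i = 1) ∧ Odd ({i | b i = 1}.ncard)} := by
  classical
  rcases Nat.eq_zero_or_pos k with rfl | hk
  · have := hF ∅ (by simp)
    simp at this
    exact absurd this (by norm_num)
  set V : Set (Fin k → ℝ) :=
    {b : Fin k → ℝ | (∀ i, b i = 0 ∨ b i = 1) ∧ Odd ({i | b i = 1}.ncard)} with hV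
  have hVfin : V.Finite := by
    apply Set.Finite.subset (Set.Finite.pi (fun i : Fin k => (Set.finite_singleton (1:ℝ)).insert 0))
    intro b hb
    simp only [Set.mem_pi, Set.mem_univ, forall_true_left]
    intro i
    rcases hb.1 i with h | h <;> simp [h]
  by_contra hnot
  obtain ⟨f, u, hfb, hfa⟩ :=
    geometric_hahn_banach_closed_point (convex_convexHull ℝ V)
      (hVfin.isClosed_convexHull (𝕜 := ℝ)) hnot
  set c : Fin k → ℝ := fun i => f (fun j => if i = j then 1 else 0) with hc
  have hf : ∀ z : Fin k → ℝ, f z = ∑ i, z i * c i := by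
    intro z
    conv_lhs => rw [pi_eq_sum_univ z]
    rw [map_sum]
    congr 1; ext i
    rw [map_smul, smul_eq_mul]
  have hfind : ∀ Q : Finset (Fin k),
      f (fun i => if i ∈ Q then (1 : ℝ) else 0) = ∑ i ∈ Q, c i := by
    intro Q
    rw [hf]
    rw [Finset.sum_congr rfl (fun i _ => by
      show (if i ∈ Q then (1:ℝ) else 0) * c i = if i ∈ Q then c i else 0
      split <;> ring)]
    rw [← Finset.sum_filter, Finset.filter_mem_eq_inter, Finset.univ_inter]
  have hub : ∀ Q : Finset (Fin k), Odd Q.card → f (fun i => if i ∈ Q then (1 : ℝ) else 0) < u := by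
    intro Q hQ
    exact hfb _ (subset_convexHull ℝ V (indicator_mem_V Q hQ))
  obtain ⟨mI, -, hmin⟩ :=
    Finset.exists_min_image Finset.univ (fun i => |c i|) ⟨⟨0, hk⟩, Finset.mem_univ _⟩
  set P : Finset (Fin k) := Finset.univ.filter (fun i => 0 < c i) with hP
  have hfa' : f a = ∑ i, a i * c i := hf a
  by_cases hodd : Odd P.card
  · -- b = indicator of P
    have hle : f a ≤ ∑ i ∈ P, c i := by
      rw [hfa', ← Finset.sum_filter_add_sum_filter_not Finset.univ (fun i => 0 < c i)
        (fun i => a i * c i), ← hP]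
      have l1 : ∑ i ∈ P, a i * c i ≤ ∑ i ∈ P, c i := by
        apply Finset.sum_le_sum
        intro i hi
        have : 0 < c i := by simp [hP] at hi; exact hi
        nlinarith [h1 i]
      have l2 : ∑ i ∈ Finset.univ.filter (fun i => ¬ 0 < c i), a i * c i ≤ 0 := by
        apply Finset.sum_nonpos
        intro i hi
        have : c i ≤ 0 := by simp [hP] at hi; exact hi
        exact mul_nonpos_of_nonneg_of_nonpos (h0 i) this
      linarith
    have := hub P hodd
    rw [hfind P] at this
    linarith
  · have heven : Even P.card := Nat.not_odd_iff_even.1 hodd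
    -- key bound
    have hcm : 0 ≤ |c mI| := abs_nonneg _
    have key : ∑ i, a i * c i ≤ ∑ i ∈ P, c i - |c mI| := by
      have split : ∑ i, a i * c i = ∑ i ∈ P, a i * c i + ∑ i ∈ Pᶜ, a i * c i :=
        (Finset.sum_add_sum_compl P _).symm
      have l1 : ∑ i ∈ P, a i * c i ≤ ∑ i ∈ P, (c i - |c mI| * (1 - a i)) := by
        apply Finset.sum_le_sum
        intro i hi
        have hci : 0 < c i := by simp [hP] at hi; exact hi
        have habs : |c mI| ≤ c i := le_trans (hmin i (Finset.mem_univ i)) (le_of_eq (abs_of_pos hci))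
        nlinarith [h1 i]
      have l2 : ∑ i ∈ Pᶜ, a i * c i ≤ ∑ i ∈ Pᶜ, -(|c mI| * a i) := by
        apply Finset.sum_le_sum
        intro i hi
        have hci' : c i ≤ 0 := by simp [hP] at hi; exact hi
        have habs : |c mI| ≤ -(c i) := le_trans (hmin i (Finset.mem_univ i)) (le_of_eq (abs_of_nonpos hci'))
        nlinarith [h0 i]
      have l3 : ∑ i ∈ P, (c i - |c mI| * (1 - a i)) + ∑ i ∈ Pᶜ, -(|c mI| * a i)
          = ∑ i ∈ P, c i - |c mI| * (∑ i ∈ Pᶜ, a i + ∑ i ∈ P, (1 - a i)) := by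
        rw [Finset.sum_sub_distrib]
        have e1 : ∑ i ∈ Pᶜ, -(|c mI| * a i) = -(|c mI| * ∑ i ∈ Pᶜ, a i) := by
          rw [Finset.sum_neg_distrib, Finset.mul_sum]
        have e2 : ∑ i ∈ P, |c mI| * (1 - a i) = |c mI| * ∑ i ∈ P, (1 - a i) :=
          (Finset.mul_sum _ _ _).symm
        rw [e1, e2]; ring
      have l4 : |c mI| * 1 ≤ |c mI| * (∑ i ∈ Pᶜ, a i + ∑ i ∈ P, (1 - a i)) :=
        mul_le_mul_of_nonneg_left (hF P heven) hcm
      calc ∑ i, a i * c i = ∑ i ∈ P, a i * c i + ∑ i ∈ Pᶜ, a i * c i := split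
        _ ≤ ∑ i ∈ P, (c i - |c mI| * (1 - a i)) + ∑ i ∈ Pᶜ, -(|c mI| * a i) := by linarith
        _ = ∑ i ∈ P, c i - |c mI| * (∑ i ∈ Pᶜ, a i + ∑ i ∈ P, (1 - a i)) := l3
        _ ≤ ∑ i ∈ P, c i - |c mI| := by linarith
    -- construct the odd vertex Q
    by_cases hmP : mI ∈ P
    · have hQodd : Odd (P.erase mI).card := by
        rw [Finset.card_erase_of_mem hmP]
        have hpos : 0 < P.card := Finset.card_pos.2 ⟨mI, hmP⟩
        rcases heven with ⟨t, ht⟩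
        refine ⟨t - 1, by omega⟩
      have hsumQ : ∑ i ∈ P.erase mI, c i = ∑ i ∈ P, c i - c mI := by
        rw [Finset.sum_erase_eq_sub hmP]
      have habs : |c mI| = c mI := abs_of_pos (by simp [hP] at hmP; exact hmP)
      have := hub _ hQodd
      rw [hfind _] at this
      rw [hsumQ, ← habs] at this
      linarith
    · have hQodd : Odd (insert mI P).card := by
        rw [Finset.card_insert_of_notMem hmP]
        rcases heven with ⟨t, ht⟩
        exact ⟨t, by omega⟩
      have hsumQ : ∑ i ∈ insert mI P, c i = c mI + ∑ i ∈ P, c i :=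
        Finset.sum_insert hmP
      have habs : |c mI| = -(c mI) := by
        apply abs_of_nonpos
        simp [hP] at hmP; exact hmP
      have := hub _ hQodd
      rw [hfind _] at this
      rw [hsumQ] at this
      linarith

lemma altSum_combo {m : ℕ} (p q : ℝ) (u v : Fin m → ℝ) :
    altSum (fun j => p * u j + q * v j) = p * altSum u + q * altSum v := by
  unfold altSum
  rw [Finset.mul_sum, Finset.mul_sum, ← Finset.sum_add_distrib]
  congr 1; ext j; ring

lemma stepVec_mono {m s : ℕ} (j j' : Fin m) (h : j ≤ j') :
    stepVec m s j' ≤ stepVec m s j := by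
  unfold stepVec
  by_cases h1 : (j' : ℕ) < s
  · rw [if_pos h1, if_pos (lt_of_le_of_lt (Fin.le_iff_val_le_val.1 h) h1)]
  · rw [if_neg h1]
    split <;> norm_num


/-- outer description of the ordered odd parity polytope. -/
theorem stmt8 (k : ℕ) (r : Fin k → ℕ) :
    convexHull ℝ
      {x : ∀ i, Fin (r i) → ℝ |
        (∀ i j, x i j = 0 ∨ x i j = 1) ∧
        (∀ i, ∀ j j' : Fin (r i), j ≤ j' → x i j' ≤ x i j) ∧
        Odd (∑ i, {j : Fin (r i) | x i j = 1}.ncard)} =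
      {x : ∀ i, Fin (r i) → ℝ |
        (∀ i, (∀ j, 0 ≤ x i j ∧ x i j ≤ 1) ∧
          ∀ j j' : Fin (r i), j ≤ j' → x i j' ≤ x i j) ∧
        ∀ F : Finset (Fin k), Even F.card →
          1 ≤ ∑ i ∈ Fᶜ, altSum (x i) + ∑ i ∈ F, (1 - altSum (x i))} := by
  classical
  apply Set.Subset.antisymm
  · apply convexHull_min
    · -- vertices satisfy the outer description
      rintro x ⟨h01, hmono, hodd⟩
      set sc : Fin k → ℕ := fun i => {j | x i j = 1}.ncard with hsc
      have hstep : ∀ i, x i = stepVec (r i) (sc i) ∧ sc i ≤ r i :=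
        fun i => eq_stepVec (x i) (h01 i) (hmono i)
      have hAS : ∀ i, altSum (x i) = ((sc i % 2 : ℕ) : ℝ) := by
        intro i
        rw [(hstep i).1, altSum_stepVec (hstep i).2]
        rcases Nat.even_or_odd (sc i) with h | h
        · rw [if_neg (Nat.not_odd_iff_even.2 h), Nat.even_iff.1 h]; norm_num
        · rw [if_pos h, Nat.odd_iff.1 h]; norm_num
      constructor
      · intro i
        refine ⟨fun j => ?_, hmono i⟩
        rcases h01 i j with h | h <;> simp [h]
      · intro F hFev
        have e1 : ∑ i ∈ Fᶜ, altSum (x i) = ((∑ i ∈ Fᶜ, sc i % 2 : ℕ) : ℝ) := by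
          rw [Nat.cast_sum]
          exact Finset.sum_congr rfl fun i _ => hAS i
        have e2 : ∑ i ∈ F, (1 - altSum (x i)) = ((∑ i ∈ F, (1 - sc i % 2) : ℕ) : ℝ) := by
          rw [Nat.cast_sum]
          refine Finset.sum_congr rfl fun i _ => ?_
          rw [hAS i]
          rcases Nat.mod_two_eq_zero_or_one (sc i) with h | h <;> rw [h] <;> norm_num
        have hn : 1 ≤ ∑ i ∈ Fᶜ, sc i % 2 + ∑ i ∈ F, (1 - sc i % 2) := by
          have hT : (∑ i, sc i) % 2 = 1 := Nat.odd_iff.mp hodd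
          have hT2 : (∑ i : Fin k, sc i % 2) % 2 = 1 := by
            rw [← Finset.sum_nat_mod]; exact hT
          have hsplit : ∑ i ∈ F, sc i % 2 + ∑ i ∈ Fᶜ, sc i % 2 = ∑ i, sc i % 2 :=
            Finset.sum_add_sum_compl F _
          have hFsum : ∑ i ∈ F, sc i % 2 + ∑ i ∈ F, (1 - sc i % 2) = F.card := by
            rw [← Finset.sum_add_distrib,
              Finset.sum_congr rfl (fun i _ => (by omega : sc i % 2 + (1 - sc i % 2) = 1))]
            simp
          have hFeven : F.card % 2 = 0 := Nat.even_iff.mp hFev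
          omega
        rw [e1, e2]
        exact_mod_cast hn
    · -- convexity of the outer description
      intro x hx y hy p q hp hq hpq
      have happ : ∀ i j, (p • x + q • y) i j = p * x i j + q * y i j := fun i j => rfl
      have hASc : ∀ i, altSum ((p • x + q • y) i) =
          p * altSum (x i) + q * altSum (y i) := by
        intro i
        have : (p • x + q • y) i = fun j => p * x i j + q * y i j := rfl
        rw [this, altSum_combo]
      constructor
      · intro i
        constructor
        · intro j
          have h1 := (hx.1 i).1 j
          have h2 := (hy.1 i).1 j
          rw [happ i j]
          constructor
          · have := mul_nonneg hp h1.1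
            have := mul_nonneg hq h2.1
            linarith
          · nlinarith [h1.2, h2.2]
        · intro j j' hj
          rw [happ i j, happ i j']
          have := mul_le_mul_of_nonneg_left ((hx.1 i).2 j j' hj) hp
          have := mul_le_mul_of_nonneg_left ((hy.1 i).2 j j' hj) hq
          linarith
      · intro F hFev
        have eA : ∑ i ∈ Fᶜ, altSum ((p • x + q • y) i)
            = p * ∑ i ∈ Fᶜ, altSum (x i) + q * ∑ i ∈ Fᶜ, altSum (y i) := by
          rw [Finset.mul_sum, Finset.mul_sum, ← Finset.sum_add_distrib]
          exact Finset.sum_congr rfl fun i _ => hASc i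
        have eB : ∑ i ∈ F, (1 - altSum ((p • x + q • y) i))
            = p * ∑ i ∈ F, (1 - altSum (x i)) + q * ∑ i ∈ F, (1 - altSum (y i)) := by
          rw [Finset.mul_sum, Finset.mul_sum, ← Finset.sum_add_distrib]
          refine Finset.sum_congr rfl fun i _ => ?_
          rw [hASc i]
          linear_combination (-1 : ℝ) * hpq
        rw [eA, eB]
        have hx2 := hx.2 F hFev
        have hy2 := hy.2 F hFev
        nlinarith
  · -- the outer description is contained in the hull
    rintro x ⟨hbox, hineq⟩
    set lam : Fin k → ℕ → ℝ := fun i => coefOf (x i) with hlamdef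
    have hlam0 : ∀ i s, 0 ≤ lam i s := fun i s =>
      coef_nonneg (x i) (fun j => (hbox i).1 j) ((hbox i).2) s
    have hlam1 : ∀ i, ∑ s ∈ Finset.range (r i + 1), lam i s = 1 := fun i => coef_sum (x i)
    have hxrep : ∀ i, x i = ∑ s ∈ Finset.range (r i + 1), lam i s • stepVec (r i) s := by
      intro i
      funext j
      rw [Finset.sum_apply]
      simp only [Pi.smul_apply, smul_eq_mul]
      exact (coef_apply (x i) j).symm
    set a : Fin k → ℝ := fun i => altSum (x i) with hadef
    have ha : ∀ i, a i
        = ∑ s ∈ (Finset.range (r i + 1)).filter (fun s => Odd s), lam i s := by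
      intro i
      show altSum (x i) = _
      have h1 : altSum (x i)
          = ∑ s ∈ Finset.range (r i + 1), lam i s * altSum (stepVec (r i) s) := by
        rw [show x i = fun j => ∑ s ∈ Finset.range (r i + 1), lam i s * stepVec (r i) s j from ?_,
          altSum_linear_sum]
        funext j
        exact (coef_apply (x i) j).symm
      have h2 : ∀ s ∈ Finset.range (r i + 1),
          lam i s * altSum (stepVec (r i) s) = if Odd s then lam i s else 0 := by
        intro s hs
        rw [altSum_stepVec (Nat.lt_succ_iff.mp (Finset.mem_range.mp hs))]
        split <;> ring
      rw [h1, Finset.sum_congr rfl h2, ← Finset.sum_filter]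
    have haE : ∀ i, 1 - a i
        = ∑ s ∈ (Finset.range (r i + 1)).filter (fun s => ¬ Odd s), lam i s := by
      intro i
      have := Finset.sum_filter_add_sum_filter_not (Finset.range (r i + 1))
        (fun s => Odd s) (lam i)
      rw [hlam1 i] at this
      rw [← ha i] at this
      linarith
    have h0a : ∀ i, 0 ≤ a i := by
      intro i
      rw [ha i]
      exact Finset.sum_nonneg fun s _ => hlam0 i s
    have h1a : ∀ i, a i ≤ 1 := by
      intro i
      rw [ha i, ← hlam1 i]
      exact Finset.sum_le_sum_of_subset_of_nonneg (Finset.filter_subset _ _)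
        (fun s _ _ => hlam0 i s)
    have haV := jeroslow k a h0a h1a hineq
    rw [convexHull_eq] at haV
    obtain ⟨ι, t, w, b, hw0, hw1, hbV, hcm⟩ := haV
    rw [Finset.centerMass_eq_of_sum_1 t b hw1] at hcm
    set t' := t.filter (fun l => w l ≠ 0) with ht'
    have hw1' : ∑ l ∈ t', w l = 1 := by rw [ht', Finset.sum_filter_ne_zero]; exact hw1
    have hw0' : ∀ l ∈ t', 0 < w l := by
      intro l hl
      rw [ht', Finset.mem_filter] at hl
      exact lt_of_le_of_ne (hw0 l hl.1) (Ne.symm hl.2)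
    have hbV' : ∀ l ∈ t', (∀ i, b l i = 0 ∨ b l i = 1) ∧ Odd ({i | b l i = 1}.ncard) :=
      fun l hl => hbV l (Finset.filter_subset _ _ hl)
    have hsum' : ∑ l ∈ t', w l • b l = a := by
      rw [← hcm, ht']
      exact Finset.sum_filter_of_ne fun l _ h => fun hw => h (by rw [hw, zero_smul])
    have ha_i : ∀ i, ∑ l ∈ t', w l * b l i = a i := by
      intro i
      have h := congrFun hsum' i
      rw [Finset.sum_apply] at h
      simpa using h
    set mOdd : ∀ i, Fin (r i) → ℝ := fun i =>
      ((Finset.range (r i + 1)).filter (fun s => Odd s)).centerMass (lam i) (stepVec (r i))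
      with hmO
    set mEven : ∀ i, Fin (r i) → ℝ := fun i =>
      ((Finset.range (r i + 1)).filter (fun s => ¬ Odd s)).centerMass (lam i) (stepVec (r i))
      with hmE
    set y : ι → ∀ i, Fin (r i) → ℝ := fun l i => if b l i = 1 then mOdd i else mEven i with hydef
    have hOsum : ∀ i, a i • mOdd i
        = ∑ s ∈ (Finset.range (r i + 1)).filter (fun s => Odd s),
            lam i s • stepVec (r i) s := by
      intro i
      by_cases h : a i = 0
      · rw [h, zero_smul]
        symm
        apply Finset.sum_eq_zero
        intro s hs
        have hz : lam i s = 0 := by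
          have h0 : ∑ s ∈ (Finset.range (r i + 1)).filter (fun s => Odd s), lam i s = 0 := by
            rw [← ha i, h]
          exact (Finset.sum_eq_zero_iff_of_nonneg (fun s _ => hlam0 i s)).1 h0 s hs
        rw [hz, zero_smul]
      · have hdef : mOdd i
            = (∑ s ∈ (Finset.range (r i + 1)).filter (fun s => Odd s), lam i s)⁻¹ •
              ∑ s ∈ (Finset.range (r i + 1)).filter (fun s => Odd s),
                lam i s • stepVec (r i) s := rfl
        rw [hdef, ← ha i, smul_inv_smul₀ h]
    have hEsum : ∀ i, (1 - a i) • mEven i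
        = ∑ s ∈ (Finset.range (r i + 1)).filter (fun s => ¬ Odd s),
            lam i s • stepVec (r i) s := by
      intro i
      by_cases h : (1 : ℝ) - a i = 0
      · rw [h, zero_smul]
        symm
        apply Finset.sum_eq_zero
        intro s hs
        have hz : lam i s = 0 := by
          have h0 : ∑ s ∈ (Finset.range (r i + 1)).filter (fun s => ¬ Odd s), lam i s = 0 := by
            rw [← haE i, h]
          exact (Finset.sum_eq_zero_iff_of_nonneg (fun s _ => hlam0 i s)).1 h0 s hs
        rw [hz, zero_smul]
      · have hdef : mEven i
            = (∑ s ∈ (Finset.range (r i + 1)).filter (fun s => ¬ Odd s), lam i s)⁻¹ •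
              ∑ s ∈ (Finset.range (r i + 1)).filter (fun s => ¬ Odd s),
                lam i s • stepVec (r i) s := rfl
        rw [hdef, ← haE i, smul_inv_smul₀ h]
    have claim1 : x = ∑ l ∈ t', w l • y l := by
      funext i
      rw [Finset.sum_apply]
      simp only [Pi.smul_apply]
      have hterm : ∀ l ∈ t', w l • y l i
          = if b l i = 1 then w l • mOdd i else w l • mEven i := by
        intro l _
        simp only [hydef]
        split <;> rfl
      rw [Finset.sum_congr rfl hterm, Finset.sum_ite, ← Finset.sum_smul, ← Finset.sum_smul]
      have hA : ∑ l ∈ t'.filter (fun l => b l i = 1), w l = a i := by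
        rw [← ha_i i, Finset.sum_filter]
        refine Finset.sum_congr rfl fun l hl => ?_
        rcases (hbV' l hl).1 i with h | h
        · rw [if_neg (by rw [h]; norm_num), h, mul_zero]
        · rw [if_pos h, h, mul_one]
      have hB : ∑ l ∈ t'.filter (fun l => ¬ b l i = 1), w l = 1 - a i := by
        have hsplit := Finset.sum_filter_add_sum_filter_not t' (fun l => b l i = 1) w
        rw [hA, hw1'] at hsplit
        linarith
      rw [hA, hB, hOsum i, hEsum i,
        Finset.sum_filter_add_sum_filter_not (Finset.range (r i + 1)) (fun s => Odd s)
          (fun s => lam i s • stepVec (r i) s)]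
      exact hxrep i
    have claim2 : ∀ l ∈ t', y l ∈ convexHull ℝ
        {x : ∀ i, Fin (r i) → ℝ |
          (∀ i j, x i j = 0 ∨ x i j = 1) ∧
          (∀ i, ∀ j j' : Fin (r i), j ≤ j' → x i j' ≤ x i j) ∧
          Odd (∑ i, {j : Fin (r i) | x i j = 1}.ncard)} := by
      intro l hl
      obtain ⟨hb01, hbodd⟩ := hbV' l hl
      have hbpos : ∀ i, b l i = 1 → a i ≠ 0 := by
        intro i hbi h0
        have hsum0 : ∑ l' ∈ t', w l' * b l' i = 0 := by rw [ha_i i, h0]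
        have hterm : ∀ l' ∈ t', 0 ≤ w l' * b l' i := by
          intro l' hl'
          refine mul_nonneg (le_of_lt (hw0' l' hl')) ?_
          rcases (hbV' l' hl').1 i with h | h <;> rw [h] <;> norm_num
        have hzz := (Finset.sum_eq_zero_iff_of_nonneg hterm).1 hsum0 l hl
        rw [hbi, mul_one] at hzz
        exact (hw0' l hl).ne' hzz
      have hbpos' : ∀ i, ¬ b l i = 1 → a i ≠ 1 := by
        intro i hbi h1
        have hsum0 : ∑ l' ∈ t', w l' * (1 - b l' i) = 0 := by
          have hexp : ∑ l' ∈ t', w l' * (1 - b l' i)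
              = ∑ l' ∈ t', w l' - ∑ l' ∈ t', w l' * b l' i := by
            rw [← Finset.sum_sub_distrib]
            exact Finset.sum_congr rfl fun l' _ => by ring
          rw [hexp, hw1', ha_i i, h1]
          ring
        have hterm : ∀ l' ∈ t', 0 ≤ w l' * (1 - b l' i) := by
          intro l' hl'
          refine mul_nonneg (le_of_lt (hw0' l' hl')) ?_
          rcases (hbV' l' hl').1 i with h | h <;> rw [h] <;> norm_num
        have hzz := (Finset.sum_eq_zero_iff_of_nonneg hterm).1 hsum0 l hl
        have hwl := hw0' l hl
        have : (1 : ℝ) - b l i = 0 := by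
          by_contra hne
          exact hne (by nlinarith)
        exact hbi (by linarith)
      set C : ∀ i, Set (Fin (r i) → ℝ) := fun i =>
        {z | ∃ s, s ≤ r i ∧ (Odd s ↔ b l i = 1) ∧ z = stepVec (r i) s} with hC
      have hyC : ∀ i, y l i ∈ convexHull ℝ (C i) := by
        intro i
        simp only [hydef]
        by_cases hbi : b l i = 1
        · rw [if_pos hbi, hmO]
          apply Finset.centerMass_mem_convexHull
          · exact fun s _ => hlam0 i s
          · rw [← ha i]
            exact lt_of_le_of_ne (h0a i) (Ne.symm (hbpos i hbi))
          · intro s hs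
            rw [Finset.mem_filter, Finset.mem_range] at hs
            exact ⟨s, Nat.lt_succ_iff.mp hs.1, ⟨fun _ => hbi, fun _ => hs.2⟩, rfl⟩
        · rw [if_neg hbi, hmE]
          apply Finset.centerMass_mem_convexHull
          · exact fun s _ => hlam0 i s
          · rw [← haE i]
            have : a i < 1 := lt_of_le_of_ne (h1a i) (hbpos' i hbi)
            linarith
          · intro s hs
            rw [Finset.mem_filter, Finset.mem_range] at hs
            exact ⟨s, Nat.lt_succ_iff.mp hs.1,
              ⟨fun h => absurd h hs.2, fun h => absurd h hbi⟩, rfl⟩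
      have hpi : y l ∈ convexHull ℝ (Set.pi Set.univ C) := by
        rw [convexHull_pi]
        exact fun i _ => hyC i
      refine convexHull_mono ?_ hpi
      intro z hz
      have hz' : ∀ i, z i ∈ C i := fun i => hz i (Set.mem_univ i)
      choose s hs1 hs2 hs3 using hz'
      refine ⟨fun i j => ?_, fun i j j' hj => ?_, ?_⟩
      · rw [hs3 i]
        unfold stepVec
        split <;> simp
      · rw [hs3 i]
        exact stepVec_mono j j' hj
      · have hco : ∀ i, {j | z i j = 1}.ncard = s i := by
          intro i
          rw [hs3 i]
          exact ncard_ones_stepVec (hs1 i)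
        rw [Finset.sum_congr rfl fun i _ => hco i]
        have hones : {i | b l i = 1}.ncard
            = (Finset.univ.filter (fun i => b l i = 1)).card := by
          rw [show {i | b l i = 1} = ↑(Finset.univ.filter (fun i => b l i = 1)) from ?_,
            Set.ncard_coe_finset]
          ext i
          simp
        have hcard : (∑ i, s i) % 2 = 1 := by
          have e1 : (∑ i : Fin k, s i) % 2 = (∑ i : Fin k, s i % 2) % 2 :=
            Finset.sum_nat_mod _ _ _
          have e2 : ∀ i : Fin k, s i % 2 = if b l i = 1 then 1 else 0 := by
            intro i
            by_cases h : b l i = 1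
            · rw [if_pos h, Nat.odd_iff.mp ((hs2 i).mpr h)]
            · rw [if_neg h]
              have : ¬ Odd (s i) := fun ho => h ((hs2 i).mp ho)
              exact Nat.even_iff.mp (Nat.not_odd_iff_even.mp this)
          have e3 : ∑ i : Fin k, s i % 2
              = (Finset.univ.filter (fun i => b l i = 1)).card := by
            rw [Finset.sum_congr rfl fun i _ => e2 i, Finset.sum_ite,
              Finset.sum_const, Finset.sum_const]
            simp
          rw [e1, e3, ← hones]
          exact Nat.odd_iff.mp hbodd
        exact Nat.odd_iff.mpr hcard
    rw [claim1]
    exact Convex.sum_mem (convex_convexHull ℝ _)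
      (fun l hl => le_of_lt (hw0' l hl)) hw1' claim2
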